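/- Let n = q^t, 1 ≤ s < t, and k ≤ n − q^s, and let g_1,…,g_t be chosen according to Construction II. Then: (i) for any two polynomials f, f' ∈ F[x] of degree at most k−1 satisfying Tr(g_i(α)·f(α)) = Tr(g_i(α)·f'(α)) for every α ∈ F∖{α*} and every i ∈ {1,…,t}, one has f(α*) = f'(α*) — so the g_i can be used to repair the codeword symbol f(α*) of the full-length Reed–Solomon code RS(F,k); and (ii) Σ_{α ∈ F∖{α*}} rank_q{g_1(α),…,g_t(α)} ≤ (n−1)(t−s), i.e., the repair bandwidth is at most (n−1)(t−s)·log₂q bits. -/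

import Mathlib

open Polynomial
open scoped Classical

set_option linter.unusedSectionVars false
set_option maxHeartbeats 1000000

section Aux
open Finset

-- Aux 1: sum of evaluations over all field elements vanishes for small degree
lemma aux_sum_eval {F : Type*} [Field F] [Fintype F] (p : F[X])
    (hp : p.natDegree < Fintype.card F - 1) : ∑ α : F, p.eval α = 0 := by
  have : ∀ α : F, p.eval α = ∑ i ∈ range (p.natDegree + 1), p.coeff i * α ^ i := by
    intro α; rw [eval_eq_sum_range]
  simp_rw [this]
  rw [Finset.sum_comm]
  refine Finset.sum_eq_zero fun i hi => ?_
  rw [← Finset.mul_sum, FiniteField.sum_pow_lt_card_sub_one F i ?_, mul_zero]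
  exact lt_of_lt_of_le (Finset.mem_range.mp hi) hp

variable {B F : Type*} [Field B] [Fintype B] [Field F] [Fintype F] [Algebra B F]

variable (B) in
noncomputable def Vfin (V : Submodule B F) : Finset F := Finset.univ.filter (· ∈ V)

variable (B) in
noncomputable def Ppoly (V : Submodule B F) : F[X] := ∏ v ∈ Vfin B V, (X - C v)

variable (V : Submodule B F)

lemma Ppoly_monic : (Ppoly B V).Monic :=
  monic_prod_of_monic _ _ fun v _ => monic_X_sub_C v

lemma Ppoly_natDegree : (Ppoly B V).natDegree = #(Vfin B V) := by
  rw [Ppoly, natDegree_prod _ _ fun v _ => X_sub_C_ne_zero v]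
  simp

lemma Ppoly_eval_of_mem {v : F} (hv : v ∈ V) : (Ppoly B V).eval v = 0 := by
  rw [Ppoly, eval_prod]
  refine Finset.prod_eq_zero (i := v) (by simp [Vfin, hv]) (by simp)

lemma card_Vfin_pos : 0 < #(Vfin B V) := by
  refine Finset.card_pos.mpr ⟨0, by simp [Vfin, V.zero_mem]⟩

lemma card_Vfin : #(Vfin B V) = Fintype.card B ^ Module.finrank B V := by
  rw [Vfin, ← Fintype.card_subtype, ← Module.card_eq_pow_finrank (K := B) (V := V)]

lemma Ppoly_degree : (Ppoly B V).degree = (#(Vfin B V) : WithBot ℕ) := by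
  rw [degree_eq_natDegree (Ppoly_monic V).ne_zero, Ppoly_natDegree]

lemma Ppoly_eval_add_of_mem {v : F} (hv : v ∈ V) (x : F) :
    (Ppoly B V).eval (x + v) = (Ppoly B V).eval x := by
  rw [Ppoly, eval_prod, eval_prod]
  refine Finset.prod_bij' (fun a _ => a - v) (fun a _ => a + v) ?_ ?_ ?_ ?_ ?_
  · intro a ha; simp only [Vfin, mem_filter, mem_univ, true_and] at ha ⊢
    exact V.sub_mem ha hv
  · intro a ha; simp only [Vfin, mem_filter, mem_univ, true_and] at ha ⊢
    exact V.add_mem ha hv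
  · intro a _; ring
  · intro a _; ring
  · intro a _; simp only [eval_sub, eval_X, eval_C]; ring

lemma Ppoly_eval_add (x y : F) :
    (Ppoly B V).eval (x + y) = (Ppoly B V).eval x + (Ppoly B V).eval y := by
  set P := Ppoly B V with hP
  set Q : F[X] := P.comp (X + C y) - P - C (P.eval y) with hQ
  have hmon : P.Monic := Ppoly_monic V
  have hroot : ∀ v ∈ Vfin B V, Q.eval v = 0 := by
    intro v hv
    simp only [Vfin, mem_filter, mem_univ, true_and] at hv
    simp only [hQ, eval_sub, eval_comp, eval_add, eval_X, eval_C]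
    rw [add_comm v y, Ppoly_eval_add_of_mem V hv y, Ppoly_eval_of_mem V hv]
    ring
  have hcomp : (P.comp (X + C y)).Monic := hmon.comp_X_add_C y
  have hdc : (P.comp (X + C y)).natDegree = P.natDegree := by
    rw [natDegree_comp]; simp
  have hdegP : (0 : WithBot ℕ) < P.degree := by
    rw [hP, Ppoly_degree]
    exact_mod_cast card_Vfin_pos V
  have hdeq : (P.comp (X + C y)).degree = P.degree := by
    rw [degree_eq_natDegree hcomp.ne_zero, degree_eq_natDegree hmon.ne_zero, hdc]
  have hsub : (P.comp (X + C y) - P).degree < P.degree := by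
    have := degree_sub_lt hdeq hcomp.ne_zero
      (by rw [hcomp.leadingCoeff, hmon.leadingCoeff])
    rwa [hdeq] at this
  have hQdeg : Q.degree < P.degree := by
    rw [hQ]
    refine lt_of_le_of_lt (degree_sub_le _ _) (max_lt hsub ?_)
    exact lt_of_le_of_lt degree_C_le hdegP
  have hQ0 : Q = 0 := by
    by_cases h0 : Q = 0
    · exact h0
    refine eq_zero_of_natDegree_lt_card_of_eval_eq_zero' Q (Vfin B V) hroot ?_
    exact (natDegree_lt_iff_degree_lt h0).mpr (hQdeg.trans_le (Ppoly_degree V).le)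
  have hx : Q.eval x = 0 := by rw [hQ0, eval_zero]
  simp only [hQ, eval_sub, eval_comp, eval_add, eval_X, eval_C] at hx
  linear_combination hx

lemma Ppoly_eval_smul (c : B) (x : F) :
    (Ppoly B V).eval (algebraMap B F c * x) = algebraMap B F c * (Ppoly B V).eval x := by
  by_cases hc : c = 0
  · simp [hc, Ppoly_eval_of_mem V V.zero_mem]
  set cb := algebraMap B F c with hcb
  have hcb0 : cb ≠ 0 := by
    simpa [hcb, _root_.map_eq_zero] using hc
  set P := Ppoly B V with hP
  set R : F[X] := P.comp (C cb * X) - C cb * P with hR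
  have hmon : P.Monic := Ppoly_monic V
  have hpow : cb ^ (#(Vfin B V)) = cb := by
    rw [card_Vfin, hcb, ← map_pow, FiniteField.pow_card_pow]
  have hroot : ∀ v ∈ Vfin B V, R.eval v = 0 := by
    intro v hv
    simp only [Vfin, mem_filter, mem_univ, true_and] at hv
    have hcv : cb * v ∈ V := by
      rw [hcb, ← Algebra.smul_def]; exact V.smul_mem c hv
    simp only [hR, eval_sub, eval_comp, eval_mul, eval_C, eval_X]
    rw [Ppoly_eval_of_mem V hcv, Ppoly_eval_of_mem V hv]
    ring
  have hxne : (C cb * X : F[X]).natDegree = 1 := by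
    simp [hcb0]
  have hdc : (P.comp (C cb * X)).natDegree = P.natDegree := by
    rw [natDegree_comp, hxne, mul_one]
  have hm : P.natDegree = #(Vfin B V) := Ppoly_natDegree V
  have hcompne : P.comp (C cb * X) ≠ 0 := by
    intro h
    have h2 := hdc
    rw [h, natDegree_zero, hm] at h2
    exact absurd h2.symm (card_Vfin_pos V).ne'
  have hmulne : C cb * P ≠ 0 := mul_ne_zero (by simpa using hcb0) hmon.ne_zero
  have hdeq : (P.comp (C cb * X)).degree = (C cb * P).degree := by
    rw [degree_eq_natDegree hcompne, degree_eq_natDegree hmulne, hdc,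
      natDegree_C_mul hcb0]
  have hlc : (P.comp (C cb * X)).leadingCoeff = (C cb * P).leadingCoeff := by
    simp [leadingCoeff_comp (by rw [hxne]; exact one_ne_zero), leadingCoeff_mul,
      hmon.leadingCoeff, hm, hpow]
  have hRdeg : R.degree < (#(Vfin B V) : WithBot ℕ) := by
    have := degree_sub_lt hdeq hcompne hlc
    rwa [degree_eq_natDegree hcompne, hdc, hm] at this
  have hR0 : R = 0 := by
    by_cases h0 : R = 0
    · exact h0
    exact eq_zero_of_natDegree_lt_card_of_eval_eq_zero' R (Vfin B V) hroot
      ((natDegree_lt_iff_degree_lt h0).mpr hRdeg)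
  have hx : R.eval x = 0 := by rw [hR0, eval_zero]
  simp only [hR, eval_sub, eval_comp, eval_mul, eval_C, eval_X] at hx
  linear_combination hx

/-- The `B`-linear map `x ↦ ∏_{v ∈ V} (x - v)`. -/
noncomputable def linMap (V : Submodule B F) : F →ₗ[B] F where
  toFun x := (Ppoly B V).eval x
  map_add' := Ppoly_eval_add V
  map_smul' c x := by
    simp only [RingHom.id_apply, Algebra.smul_def]
    exact Ppoly_eval_smul V c x

end Aux

/-- Theorem 4. Let `n = q^t`, `1 ≤ s < t`, `k ≤ n - q^s`, and let
`g₁, …, g_t` be chosen according to Construction II. Then (i) the traces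
`Tr(gᵢ(α) f(α))`, `α ∈ F \ {α*}`, `i ∈ [t]`, determine the codeword symbol `f(α*)` of
the full-length Reed–Solomon code `RS(F, k)`, and (ii) the repair bandwidth is at most
`(n-1)(t-s)` sub-symbols:
`Σ_{α ∈ F \ {α*}} rank_q {g₁(α), …, g_t(α)} ≤ (n-1)(t-s)`. -/
theorem constructionII_repair
    (q t s k n : ℕ) (B F : Type*) [Field B] [Fintype B] [Field F] [Fintype F]
    [Algebra B F]
    (hq : Fintype.card B = q) (ht : Module.finrank B F = t)
    (hs1 : 1 ≤ s) (hst : s < t)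
    (hn : n = q ^ t) (hk : k ≤ n - q ^ s)
    (αstar : F) (β : Module.Basis (Fin t) B F)
    (W : Submodule B F) (hW : Module.finrank B W = s)
    (g : Fin t → F[X])
    (hg : ∀ i, g i = C (β i) *
      ∏ w ∈ Finset.univ.filter (fun w : F => w ∈ W ∧ w ≠ 0),
        (X - C (αstar - w⁻¹ * β i))) :
    (∀ f f' : F[X], f.degree < (k : WithBot ℕ) → f'.degree < (k : WithBot ℕ) →
      (∀ α : F, α ≠ αstar → ∀ i : Fin t,
        Algebra.trace B F ((g i).eval α * f.eval α)
          = Algebra.trace B F ((g i).eval α * f'.eval α)) →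
      f.eval αstar = f'.eval αstar) ∧
    ∑ α ∈ Finset.univ.erase αstar,
        Module.finrank B (Submodule.span B (Set.range fun i => (g i).eval α))
      ≤ (n - 1) * (t - s) := by
  classical
  set Wfin : Finset F := Finset.univ.filter (fun w : F => w ∈ W ∧ w ≠ 0) with hWfin
  set c : F := ∏ w ∈ Wfin, w with hcdef
  have hwne : ∀ w ∈ Wfin, w ≠ 0 := fun w hw => ((Finset.mem_filter.mp hw).2).2
  have hwmem : ∀ w ∈ Wfin, w ∈ W := fun w hw => ((Finset.mem_filter.mp hw).2).1
  have hc0 : c ≠ 0 := Finset.prod_ne_zero_iff.mpr hwne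
  have hq2 : 2 ≤ q := hq ▸ Fintype.one_lt_card
  have hcardF : Fintype.card F = n := by
    rw [hn, ← hq, ← ht]; exact Module.card_eq_pow_finrank (K := B) (V := F)
  have h0nW : (0 : F) ∉ Wfin := by simp [hWfin]
  have hWall : Vfin B W = insert (0 : F) Wfin := by
    ext w
    simp only [Vfin, hWfin, Finset.mem_filter, Finset.mem_univ, true_and,
      Finset.mem_insert]
    by_cases hw : w = 0
    · simp [hw, W.zero_mem]
    · simp [hw]
  have hcardWfin : Wfin.card = q ^ s - 1 := by
    have h1 : (Vfin B W).card = q ^ s := by rw [card_Vfin, hq, hW]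
    rw [hWall, Finset.card_insert_of_notMem h0nW] at h1
    omega
  have hqs1 : 1 ≤ q ^ s := Nat.one_le_pow _ _ (by omega)
  -- key evaluation identities
  have keyStar : ∀ i, (g i).eval αstar = c⁻¹ * (β i) ^ (q ^ s) := by
    intro i
    rw [hg i, eval_mul, eval_C, eval_prod]
    simp only [eval_sub, eval_X, eval_C, sub_sub_cancel]
    rw [Finset.prod_mul_distrib, Finset.prod_inv_distrib, Finset.prod_const, ← hcdef,
      hcardWfin]
    have h1 : β i * (c⁻¹ * β i ^ (q ^ s - 1)) = c⁻¹ * (β i ^ (q ^ s - 1) * β i) := by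
      ring
    rw [h1, ← pow_succ, Nat.sub_add_cancel hqs1]
  have keyEval : ∀ (α : F), α ≠ αstar → ∀ i,
      (g i).eval α
        = c⁻¹ * (Ppoly B (W.map (LinearMap.mulLeft B (α - αstar)))).eval (β i) := by
    intro α hα i
    set u : F := α - αstar with hu
    have hu0 : u ≠ 0 := sub_ne_zero.mpr hα
    set V : Submodule B F := W.map (LinearMap.mulLeft B u) with hV
    rw [hg i, eval_mul, eval_C, eval_prod]
    simp only [eval_sub, eval_X, eval_C]
    have s1 : ∏ w ∈ Wfin, (α - (αstar - w⁻¹ * β i))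
        = ∏ w ∈ Wfin, (w⁻¹ * (β i + w * u)) := by
      refine Finset.prod_congr rfl fun w hw => ?_
      have hw0 := hwne w hw
      field_simp [hu]
      ring
    rw [s1, Finset.prod_mul_distrib, Finset.prod_inv_distrib, ← hcdef, mul_left_comm]
    congr 1
    have s3 : β i * ∏ w ∈ Wfin, (β i + w * u) = ∏ w ∈ Vfin B W, (β i + w * u) := by
      rw [hWall, Finset.prod_insert h0nW, zero_mul, add_zero]
    have s4 : ∏ w ∈ Vfin B W, (β i + w * u) = ∏ v ∈ Vfin B V, (β i + v) := by
      refine Finset.prod_bij' (fun w _ => w * u) (fun v _ => v * u⁻¹) ?_ ?_ ?_ ?_ ?_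
      · intro w hw
        simp only [Vfin, Finset.mem_filter, Finset.mem_univ, true_and] at hw ⊢
        exact ⟨w, hw, mul_comm u w⟩
      · intro v hv
        simp only [Vfin, hV, Finset.mem_filter, Finset.mem_univ, true_and,
          Submodule.mem_map] at hv ⊢
        obtain ⟨w, hwW, hwv⟩ := hv
        have : v * u⁻¹ = w := by
          rw [← hwv]; simp only [LinearMap.mulLeft_apply]; field_simp
        rw [this]; exact hwW
      · intro w _; field_simp
      · intro v _; field_simp
      · intro w _; rfl
    have s5 : ∏ v ∈ Vfin B V, (β i + v) = (Ppoly B V).eval (β i) := by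
      rw [Ppoly, eval_prod]
      refine Finset.prod_bij' (fun v _ => -v) (fun v _ => -v) ?_ ?_ ?_ ?_ ?_
      · intro v hv
        simp only [Vfin, Finset.mem_filter, Finset.mem_univ, true_and] at hv ⊢
        exact V.neg_mem hv
      · intro v hv
        simp only [Vfin, Finset.mem_filter, Finset.mem_univ, true_and] at hv ⊢
        exact V.neg_mem hv
      · intro v _; ring
      · intro v _; ring
      · intro v _; simp only [eval_sub, eval_X, eval_C]; ring
    rw [s3, s4, s5]
  constructor
  · intro f f' hf hf' htr
    set h : F[X] := f - f' with hh
    by_cases hh0 : h = 0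
    · have hff : f = f' := sub_eq_zero.mp hh0
      rw [hff]
    have hTr : ∀ i, Algebra.trace B F ((g i).eval αstar * h.eval αstar) = 0 := by
      intro i
      have hprodne : (∏ w ∈ Wfin, (X - C (αstar - w⁻¹ * β i)) : F[X]) ≠ 0 :=
        Finset.prod_ne_zero_iff.mpr fun w _ => X_sub_C_ne_zero _
      have hgne : g i ≠ 0 := by
        rw [hg i]
        exact mul_ne_zero (by simp [β.ne_zero i]) hprodne
      have hgdeg : (g i).natDegree = q ^ s - 1 := by
        rw [hg i, natDegree_mul (by simp [β.ne_zero i]) hprodne, natDegree_C,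
          natDegree_prod _ _ (fun w _ => X_sub_C_ne_zero _)]
        rw [Finset.sum_congr rfl fun w _ => natDegree_X_sub_C (αstar - w⁻¹ * β i),
          Finset.sum_const, smul_eq_mul, mul_one, hcardWfin, zero_add]
      have hdh : h.degree < (k : WithBot ℕ) :=
        lt_of_le_of_lt (degree_sub_le f f') (max_lt hf hf')
      have hhnd : h.natDegree < k := (natDegree_lt_iff_degree_lt hh0).mpr hdh
      have hqsn : q ^ s ≤ n := by
        rw [hn]; exact Nat.pow_le_pow_right (by omega) hst.le
      have hqs2 : 2 ≤ q ^ s := le_trans hq2 (Nat.le_self_pow (by omega) q)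
      have hnd : (g i * h).natDegree < Fintype.card F - 1 := by
        rw [natDegree_mul hgne hh0, hgdeg, hcardF]
        omega
      have hsum := aux_sum_eval (g i * h) hnd
      rw [← Finset.add_sum_erase Finset.univ _ (Finset.mem_univ αstar)] at hsum
      have hstar : (g i * h).eval αstar
          = - ∑ α ∈ Finset.univ.erase αstar, (g i * h).eval α :=
        eq_neg_of_add_eq_zero_left hsum
      have htr0 := congrArg (Algebra.trace B F) hstar
      rw [map_neg, map_sum] at htr0
      have hterm : ∀ α ∈ Finset.univ.erase αstar,
          Algebra.trace B F ((g i * h).eval α) = 0 := by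
        intro α hα
        have hαne : α ≠ αstar := Finset.ne_of_mem_erase hα
        rw [eval_mul, hh, eval_sub, mul_sub, map_sub, htr α hαne i, sub_self]
      rw [Finset.sum_eq_zero hterm, neg_zero] at htr0
      rw [← eval_mul]
      exact htr0
    suffices hx0 : h.eval αstar = 0 by
      have : f.eval αstar - f'.eval αstar = 0 := by
        rw [← eval_sub, ← hh]; exact hx0
      exact sub_eq_zero.mp this
    by_contra hx0
    set x : F := h.eval αstar with hx
    -- characteristic setup
    set p : ℕ := ringChar B with hpdef
    haveI hCB : CharP B p := ringChar.charP B
    obtain ⟨m, hpm, hqpm⟩ := FiniteField.card B p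
    haveI : Fact p.Prime := ⟨hpm⟩
    haveI : CharP F p := charP_of_injective_algebraMap (algebraMap B F).injective p
    have hqs : q ^ s = p ^ ((m : ℕ) * s) := by
      rw [← hq, hqpm, pow_mul]
    -- the Frobenius-power linear map
    set φ : F →ₗ[B] F :=
      { toFun := fun y => y ^ q ^ s,
        map_add' := fun y z => by
          show (y + z) ^ q ^ s = y ^ q ^ s + z ^ q ^ s
          rw [hqs]
          exact add_pow_char_pow y z p ((m : ℕ) * s),
        map_smul' := fun b y => by
          simp only [Algebra.smul_def, RingHom.id_apply, mul_pow]
          congr 1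
          rw [← map_pow]
          congr 1
          rw [← hq]
          exact FiniteField.pow_card_pow s b } with hφ
    have hφapp : ∀ y : F, φ y = y ^ q ^ s := fun y => rfl
    have hφinj : Function.Injective φ := by
      intro y z hyz
      have hyz' : y ^ p ^ ((m : ℕ) * s) = z ^ p ^ ((m : ℕ) * s) := by
        rw [← hqs]
        simpa [hφapp] using hyz
      have h1 : (y - z) ^ p ^ ((m : ℕ) * s) = 0 := by
        rw [sub_pow_char_pow, hyz', sub_self]
      have h2 : y - z = 0 := by
        have := pow_eq_zero_iff (n := p ^ ((m : ℕ) * s))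
          (pow_ne_zero _ hpm.ne_zero) |>.mp h1
        exact this
      exact sub_eq_zero.mp h2
    have hφsurj : Function.Surjective φ := LinearMap.injective_iff_surjective.mp hφinj
    set d : F := c⁻¹ * x with hd
    have hd0 : d ≠ 0 := mul_ne_zero (inv_ne_zero hc0) hx0
    set T : F →ₗ[B] B := (Algebra.trace B F) ∘ₗ ((LinearMap.mulLeft B d) ∘ₗ φ) with hT
    have hTapp : ∀ y : F, T y = Algebra.trace B F (d * y ^ q ^ s) := fun y => rfl
    have hTβ : ∀ i, T (β i) = 0 := by
      intro i
      have h1 := hTr i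
      rw [keyStar i] at h1
      rw [hTapp]
      have he : d * (β i) ^ (q ^ s) = c⁻¹ * (β i) ^ (q ^ s) * x := by
        rw [hd]; ring
      rw [he]
      exact h1
    have hT0 : T = 0 := β.ext fun i => by rw [hTβ i, LinearMap.zero_apply]
    have htrace0 : ∀ z : F, Algebra.trace B F z = 0 := by
      intro z
      obtain ⟨y, hy⟩ := hφsurj (d⁻¹ * z)
      have h1 : T y = 0 := by rw [hT0, LinearMap.zero_apply]
      rw [hTapp, ← hφapp, hy, ← mul_assoc, mul_inv_cancel₀ hd0, one_mul] at h1
      exact h1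
    exact Algebra.trace_ne_zero B F (LinearMap.ext htrace0)
  · -- part (ii)
    have perAlpha : ∀ α ∈ Finset.univ.erase αstar,
        Module.finrank B (Submodule.span B (Set.range fun i => (g i).eval α))
          ≤ t - s := by
      intro α hα
      have hαne : α ≠ αstar := Finset.ne_of_mem_erase hα
      set u : F := α - αstar with hu
      have hu0 : u ≠ 0 := sub_ne_zero.mpr hαne
      set V : Submodule B F := W.map (LinearMap.mulLeft B u) with hV
      have hVr : Module.finrank B V = s := by
        rw [hV, ← hW]
        exact LinearEquiv.finrank_map_eq (LinearEquiv.ofLinear (LinearMap.mulLeft B u)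
          (LinearMap.mulLeft B u⁻¹)
          (by ext x; simp [LinearMap.mulLeft_apply]; field_simp)
          (by ext x; simp [LinearMap.mulLeft_apply]; field_simp)) W
      set ℓ : F →ₗ[B] F := (LinearMap.mulLeft B c⁻¹).comp (linMap V) with hℓ
      have hgα : ∀ i, (g i).eval α = ℓ (β i) := by
        intro i
        rw [keyEval α hαne i]
        simp [hℓ, linMap, LinearMap.mulLeft_apply]
        left; rfl
      have hsp : Submodule.span B (Set.range fun i => (g i).eval α)
          ≤ LinearMap.range ℓ := by
        rw [Submodule.span_le]
        rintro _ ⟨i, rfl⟩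
        exact ⟨β i, (hgα i).symm⟩
      have h1 := Submodule.finrank_mono hsp
      have hker : V ≤ LinearMap.ker ℓ := by
        intro v hv
        simp [hℓ, LinearMap.mem_ker, linMap, LinearMap.mulLeft_apply,
          Ppoly_eval_of_mem V hv]
      have h2 : s ≤ Module.finrank B (LinearMap.ker ℓ) :=
        hVr ▸ Submodule.finrank_mono hker
      have h3 := LinearMap.finrank_range_add_finrank_ker ℓ
      rw [ht] at h3
      omega
    calc ∑ α ∈ Finset.univ.erase αstar,
          Module.finrank B (Submodule.span B (Set.range fun i => (g i).eval α))
        ≤ ∑ _α ∈ Finset.univ.erase αstar, (t - s) := Finset.sum_le_sum perAlpha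
      _ = (n - 1) * (t - s) := by
          rw [Finset.sum_const, smul_eq_mul, Finset.card_erase_of_mem (Finset.mem_univ _),
            Finset.card_univ, hcardF]
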